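/- For any α, β > 0, ρ > 0, the quantity α·Φ̄(ρ/2 + (1/ρ)log(α/β)) + β·Φ(−ρ/2 + (1/ρ)log(α/β)) is bounded above by 2√(αβ)·exp(−ρ²/8). In particular, with ρ = ‖θ₀−θ₁‖/2 this gives a testing error bound of 2√(αβ)·exp(−‖θ₀−θ₁‖²/32). -/

import Mathlib

open Real

/-- The standard normal distribution function. -/
noncomputable def stdNormalCDF (t : ℝ) : ℝ :=
  (2 * Real.pi) ^ (-(1 : ℝ) / 2) * ∫ x in Set.Iic t, Real.exp (-x ^ 2 / 2)

open MeasureTheory in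
private lemma gauss_integrable : Integrable (fun x : ℝ => Real.exp (-x ^ 2 / 2)) := by
  have h := integrable_exp_neg_mul_sq (show (0:ℝ) < 1/2 by norm_num)
  convert h using 2 with x
  ring_nf

open MeasureTheory in
private lemma gauss_total : ∫ x : ℝ, Real.exp (-x ^ 2 / 2) = Real.sqrt (2 * π) := by
  have h := integral_gaussian (1/2)
  have : (fun x : ℝ => Real.exp (-x ^ 2 / 2)) = fun x : ℝ => Real.exp (-(1/2) * x ^ 2) := by
    funext x; ring_nf
  rw [show (∫ x : ℝ, Real.exp (-x ^ 2 / 2)) = ∫ x : ℝ, Real.exp (-(1/2) * x ^ 2) by rw [this],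
    h]
  rw [show π / (1/2) = 2 * π by ring]

private lemma normconst_pos : 0 < (2 * Real.pi) ^ (-(1 : ℝ) / 2) :=
  Real.rpow_pos_of_pos (by positivity) _

private lemma normconst_mul : (2 * Real.pi) ^ (-(1 : ℝ) / 2) * Real.sqrt (2 * π) = 1 := by
  rw [Real.sqrt_eq_rpow, ← Real.rpow_add (by positivity)]
  norm_num

open MeasureTheory in
private lemma cdf_nonneg (t : ℝ) : 0 ≤ stdNormalCDF t := by
  unfold stdNormalCDF
  apply mul_nonneg normconst_pos.le
  apply integral_nonneg
  intro x; positivity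

open MeasureTheory in
private lemma cdf_le_one (t : ℝ) : stdNormalCDF t ≤ 1 := by
  unfold stdNormalCDF
  calc (2 * Real.pi) ^ (-(1 : ℝ) / 2) * ∫ x in Set.Iic t, Real.exp (-x ^ 2 / 2)
      ≤ (2 * Real.pi) ^ (-(1 : ℝ) / 2) * ∫ x : ℝ, Real.exp (-x ^ 2 / 2) := by
        apply mul_le_mul_of_nonneg_left _ normconst_pos.le
        exact setIntegral_le_integral gauss_integrable
          (Filter.Eventually.of_forall fun x => by positivity)
    _ = 1 := by rw [gauss_total, normconst_mul]

open MeasureTheory in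
private lemma gauss_shift_integrable (s : ℝ) :
    Integrable (fun x : ℝ => Real.exp (-s ^ 2 / 2) * Real.exp (-(x - s) ^ 2 / 2)) := by
  exact (gauss_integrable.comp_sub_right s).const_mul _

open MeasureTheory in
private lemma gauss_shift_int_le (s : ℝ) :
    ∫ x : ℝ in Set.Iic s, Real.exp (-s ^ 2 / 2) * Real.exp (-(x - s) ^ 2 / 2)
      ≤ Real.exp (-s ^ 2 / 2) * Real.sqrt (2 * π) := by
  rw [integral_const_mul]
  apply mul_le_mul_of_nonneg_left _ (Real.exp_nonneg _)
  calc ∫ x : ℝ in Set.Iic s, Real.exp (-(x - s) ^ 2 / 2)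
      ≤ ∫ x : ℝ, Real.exp (-(x - s) ^ 2 / 2) :=
        setIntegral_le_integral (gauss_integrable.comp_sub_right s)
          (Filter.Eventually.of_forall fun x => by positivity)
    _ = Real.sqrt (2 * π) := by
        rw [integral_sub_right_eq_self (fun x => Real.exp (-x ^ 2 / 2)) s, gauss_total]

open MeasureTheory in
private lemma gauss_shift_int_le' (s : ℝ) :
    ∫ x : ℝ in Set.Ioi s, Real.exp (-s ^ 2 / 2) * Real.exp (-(x - s) ^ 2 / 2)
      ≤ Real.exp (-s ^ 2 / 2) * Real.sqrt (2 * π) := by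
  rw [integral_const_mul]
  apply mul_le_mul_of_nonneg_left _ (Real.exp_nonneg _)
  calc ∫ x : ℝ in Set.Ioi s, Real.exp (-(x - s) ^ 2 / 2)
      ≤ ∫ x : ℝ, Real.exp (-(x - s) ^ 2 / 2) :=
        setIntegral_le_integral (gauss_integrable.comp_sub_right s)
          (Filter.Eventually.of_forall fun x => by positivity)
    _ = Real.sqrt (2 * π) := by
        rw [integral_sub_right_eq_self (fun x => Real.exp (-x ^ 2 / 2)) s, gauss_total]

open MeasureTheory in
private lemma cdf_tail_lower {s : ℝ} (hs : s ≤ 0) :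
    stdNormalCDF s ≤ Real.exp (-s ^ 2 / 2) := by
  unfold stdNormalCDF
  calc (2 * Real.pi) ^ (-(1 : ℝ) / 2) * ∫ x in Set.Iic s, Real.exp (-x ^ 2 / 2)
      ≤ (2 * Real.pi) ^ (-(1 : ℝ) / 2) *
          ∫ x in Set.Iic s, Real.exp (-s ^ 2 / 2) * Real.exp (-(x - s) ^ 2 / 2) := by
        apply mul_le_mul_of_nonneg_left _ normconst_pos.le
        apply setIntegral_mono_on gauss_integrable.integrableOn
          (gauss_shift_integrable s).integrableOn measurableSet_Iic
        intro x hx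
        rw [← Real.exp_add, Real.exp_le_exp]
        have hx' : x ≤ s := hx
        nlinarith [mul_nonneg (neg_nonneg.2 hs) (sub_nonneg.2 hx')]
    _ ≤ (2 * Real.pi) ^ (-(1 : ℝ) / 2) * (Real.exp (-s ^ 2 / 2) * Real.sqrt (2 * π)) :=
        mul_le_mul_of_nonneg_left (gauss_shift_int_le s) normconst_pos.le
    _ = Real.exp (-s ^ 2 / 2) := by
        rw [mul_comm (Real.exp _), ← mul_assoc, normconst_mul, one_mul]

open MeasureTheory in
private lemma cdf_tail_upper {s : ℝ} (hs : 0 ≤ s) :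
    1 - stdNormalCDF s ≤ Real.exp (-s ^ 2 / 2) := by
  have hsplit : (∫ x in Set.Iic s, Real.exp (-x ^ 2 / 2))
      + (∫ x in Set.Ioi s, Real.exp (-x ^ 2 / 2)) = ∫ x : ℝ, Real.exp (-x ^ 2 / 2) :=
    intervalIntegral.integral_Iic_add_Ioi gauss_integrable.integrableOn
      gauss_integrable.integrableOn
  have h2 : (2 * Real.pi) ^ (-(1 : ℝ) / 2) * (∫ x in Set.Iic s, Real.exp (-x ^ 2 / 2))
      + (2 * Real.pi) ^ (-(1 : ℝ) / 2) * (∫ x in Set.Ioi s, Real.exp (-x ^ 2 / 2)) = 1 := by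
    rw [← mul_add, hsplit, gauss_total, normconst_mul]
  have h1 : 1 - stdNormalCDF s
      = (2 * Real.pi) ^ (-(1 : ℝ) / 2) * ∫ x in Set.Ioi s, Real.exp (-x ^ 2 / 2) := by
    unfold stdNormalCDF
    linarith
  rw [h1]
  calc (2 * Real.pi) ^ (-(1 : ℝ) / 2) * ∫ x in Set.Ioi s, Real.exp (-x ^ 2 / 2)
      ≤ (2 * Real.pi) ^ (-(1 : ℝ) / 2) *
          ∫ x in Set.Ioi s, Real.exp (-s ^ 2 / 2) * Real.exp (-(x - s) ^ 2 / 2) := by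
        apply mul_le_mul_of_nonneg_left _ normconst_pos.le
        apply setIntegral_mono_on gauss_integrable.integrableOn
          (gauss_shift_integrable s).integrableOn measurableSet_Ioi
        intro x hx
        rw [← Real.exp_add, Real.exp_le_exp]
        have hx' : s ≤ x := le_of_lt hx
        nlinarith [mul_nonneg hs (sub_nonneg.2 hx')]
    _ ≤ (2 * Real.pi) ^ (-(1 : ℝ) / 2) * (Real.exp (-s ^ 2 / 2) * Real.sqrt (2 * π)) :=
        mul_le_mul_of_nonneg_left (gauss_shift_int_le' s) normconst_pos.le
    _ = Real.exp (-s ^ 2 / 2) := by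
        rw [mul_comm (Real.exp _), ← mul_assoc, normconst_mul, one_mul]

theorem testing_error_bound (α β ρ : ℝ) (hα : 0 < α) (hβ : 0 < β) (hρ : 0 < ρ) :
    α * (1 - stdNormalCDF (ρ / 2 + (1 / ρ) * Real.log (α / β)))
      + β * stdNormalCDF (-ρ / 2 + (1 / ρ) * Real.log (α / β)) ≤
    2 * Real.sqrt (α * β) * Real.exp (-ρ ^ 2 / 8) := by
  set t : ℝ := (1 / ρ) * Real.log (α / β) with ht_def
  have hρ0 : ρ ≠ 0 := ne_of_gt hρ
  have hab : 0 < α / β := div_pos hα hβ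
  have hρt : ρ * t = Real.log (α / β) := by
    rw [ht_def]; field_simp
  set S : ℝ := Real.sqrt (α * β) with hS_def
  have hS_pos : 0 < S := Real.sqrt_pos.2 (mul_pos hα hβ)
  have hexp_half : Real.exp (ρ * t / 2) = Real.sqrt (α / β) := by
    rw [hρt, ← Real.log_sqrt hab.le, Real.exp_log (Real.sqrt_pos.2 hab)]
  have hαeq : α = S * Real.exp (ρ * t / 2) := by
    rw [hexp_half, hS_def, ← Real.sqrt_mul (mul_nonneg hα.le hβ.le)]
    rw [show α * β * (α / β) = α ^ 2 by field_simp]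
    exact (Real.sqrt_sq hα.le).symm
  have hβeq : β = S * Real.exp (-(ρ * t) / 2) := by
    rw [show -(ρ * t) / 2 = -(ρ * t / 2) by ring, Real.exp_neg, hexp_half, hS_def,
      ← Real.sqrt_inv, inv_div, ← Real.sqrt_mul (mul_nonneg hα.le hβ.le),
      show α * β * (β / α) = β ^ 2 by field_simp]
    exact (Real.sqrt_sq hβ.le).symm
  have hE : (0:ℝ) < Real.exp (-ρ ^ 2 / 8) := Real.exp_pos _
  have key1 : α * (1 - stdNormalCDF (ρ / 2 + t)) ≤ S * Real.exp (-ρ ^ 2 / 8) := by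
    rcases le_or_gt 0 (ρ / 2 + t) with h | h
    · calc α * (1 - stdNormalCDF (ρ / 2 + t))
          ≤ α * Real.exp (-(ρ / 2 + t) ^ 2 / 2) :=
            mul_le_mul_of_nonneg_left (cdf_tail_upper h) hα.le
        _ = S * Real.exp (ρ * t / 2 + -(ρ / 2 + t) ^ 2 / 2) := by
            rw [hαeq, mul_assoc, ← Real.exp_add]
        _ ≤ S * Real.exp (-ρ ^ 2 / 8) := by
            apply mul_le_mul_of_nonneg_left _ hS_pos.le
            rw [Real.exp_le_exp]
            nlinarith [sq_nonneg t]
    · calc α * (1 - stdNormalCDF (ρ / 2 + t))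
          ≤ α * 1 := by
            apply mul_le_mul_of_nonneg_left _ hα.le
            linarith [cdf_nonneg (ρ / 2 + t)]
        _ = S * Real.exp (ρ * t / 2) := by rw [mul_one, hαeq]
        _ ≤ S * Real.exp (-ρ ^ 2 / 8) := by
            apply mul_le_mul_of_nonneg_left _ hS_pos.le
            rw [Real.exp_le_exp]
            nlinarith [mul_pos hρ hρ, mul_neg_of_pos_of_neg hρ (show ρ / 2 + t < 0 from h)]
  have key2 : β * stdNormalCDF (-ρ / 2 + t) ≤ S * Real.exp (-ρ ^ 2 / 8) := by
    rcases le_or_gt (-ρ / 2 + t) 0 with h | h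
    · calc β * stdNormalCDF (-ρ / 2 + t)
          ≤ β * Real.exp (-(-ρ / 2 + t) ^ 2 / 2) :=
            mul_le_mul_of_nonneg_left (cdf_tail_lower h) hβ.le
        _ = S * Real.exp (-(ρ * t) / 2 + -(-ρ / 2 + t) ^ 2 / 2) := by
            rw [hβeq, mul_assoc, ← Real.exp_add]
        _ ≤ S * Real.exp (-ρ ^ 2 / 8) := by
            apply mul_le_mul_of_nonneg_left _ hS_pos.le
            rw [Real.exp_le_exp]
            nlinarith [sq_nonneg t]
    · calc β * stdNormalCDF (-ρ / 2 + t)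
          ≤ β * 1 := mul_le_mul_of_nonneg_left (cdf_le_one _) hβ.le
        _ = S * Real.exp (-(ρ * t) / 2) := by rw [mul_one, hβeq]
        _ ≤ S * Real.exp (-ρ ^ 2 / 8) := by
            apply mul_le_mul_of_nonneg_left _ hS_pos.le
            rw [Real.exp_le_exp]
            nlinarith [mul_pos hρ hρ, mul_pos hρ (show 0 < -ρ / 2 + t from h)]
  calc α * (1 - stdNormalCDF (ρ / 2 + t)) + β * stdNormalCDF (-ρ / 2 + t)
      ≤ S * Real.exp (-ρ ^ 2 / 8) + S * Real.exp (-ρ ^ 2 / 8) := add_le_add key1 key2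
    _ = 2 * S * Real.exp (-ρ ^ 2 / 8) := by ring
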